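/- Let u, v, w ∈ ℝ^N, φ_{abc} = u_a·v_b·w_c, D = λ_d + λ_p·N·(α₁+α₂+α₃) + λ_t·N^{3/2}, and assume the solution condition λ₂ + (D/N³)·|u|²·|v|²·|w|² = 0. Then the Hessian of V at φ in the direction of the solution itself satisfies H(φ)(u⊗v⊗w) = −2λ₂·(u⊗v⊗w). -/

import Mathlib

open Finset

/-- The potential of the quartic `O(N)^3` tensor model. -/
noncomputable def potV (N : ℕ) (l2 ld lp lt a1 a2 a3 : ℝ)
    (φ : Fin N → Fin N → Fin N → ℝ) : ℝ :=
  l2 / 2 * (∑ a, ∑ b, ∑ c, (φ a b c) ^ 2)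
  + ld / (4 * (N : ℝ) ^ 3) * (∑ a, ∑ b, ∑ c, (φ a b c) ^ 2) ^ 2
  + lp / (4 * (N : ℝ) ^ 2) *
      (a1 * ∑ a, ∑ b, ∑ c, ∑ a', ∑ b', ∑ c',
          φ a b c * φ a b' c' * φ a' b' c' * φ a' b c
       + a2 * ∑ a, ∑ b, ∑ c, ∑ a', ∑ b', ∑ c',
          φ a b c * φ a' b c' * φ a' b' c' * φ a b' c
       + a3 * ∑ a, ∑ b, ∑ c, ∑ a', ∑ b', ∑ c',
          φ a b c * φ a' b' c * φ a' b' c' * φ a b c')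
  + lt / (4 * (N : ℝ) ^ ((3 : ℝ) / 2)) *
      ∑ a, ∑ b, ∑ c, ∑ a', ∑ b', ∑ c',
        φ a b c * φ a b' c' * φ a' b c' * φ a' b' c

/-- The field equations of the quartic `O(N)^3` tensor model (vanishing gradient of `potV`). -/
def FieldEqs (N : ℕ) (l2 ld lp lt a1 a2 a3 : ℝ)
    (φ : Fin N → Fin N → Fin N → ℝ) : Prop :=
  ∀ a b c,
    l2 * φ a b c
    + ld / (N : ℝ) ^ 3 * (∑ a', ∑ b', ∑ c', (φ a' b' c') ^ 2) * φ a b c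
    + lp / (N : ℝ) ^ 2 *
        (a1 * ∑ a', ∑ b', ∑ c', φ a b' c' * φ a' b' c' * φ a' b c
         + a2 * ∑ a', ∑ b', ∑ c', φ a' b c' * φ a' b' c' * φ a b' c
         + a3 * ∑ a', ∑ b', ∑ c', φ a' b' c * φ a' b' c' * φ a b c')
    + lt / (N : ℝ) ^ ((3 : ℝ) / 2) *
        ∑ a', ∑ b', ∑ c', φ a b' c' * φ a' b c' * φ a' b' c = 0

/-- The Hessian of `potV` at `φ` (the matrix of second partial derivatives
`H(φ)_{abc,a'b'c'} = ∂²V/∂φ_{abc}∂φ_{a'b'c'}`), acting on a tensor field `χ` by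
`(H(φ)χ)_{abc} = Σ_{a'b'c'} H(φ)_{abc,a'b'c'} χ_{a'b'c'}`. -/
noncomputable def hessApply (N : ℕ) (l2 ld lp lt a1 a2 a3 : ℝ)
    (φ χ : Fin N → Fin N → Fin N → ℝ) : Fin N → Fin N → Fin N → ℝ :=
  fun a b c =>
    deriv (fun s : ℝ =>
      deriv (fun t : ℝ =>
        potV N l2 ld lp lt a1 a2 a3
          (fun a' b' c' => φ a' b' c' + t * χ a' b' c'
            + s * (if a' = a ∧ b' = b ∧ c' = c then (1 : ℝ) else 0))) 0) 0

theorem sum_ite_c' {N : ℕ} {p : Prop} [Decidable p] (f : Fin N → ℝ) :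
    (∑ i, if p then f i else 0) = if p then (∑ i, f i) else 0 := by
  split_ifs <;> simp

theorem exA' {N : ℕ} (f : Fin N → ℝ) (c : ℝ) : (∑ i, c * f i) = c * ∑ i, f i :=
  (Finset.mul_sum _ _ _).symm

theorem exB' {N : ℕ} (f : Fin N → ℝ) (c : ℝ) : (∑ i, f i * c) = (∑ i, f i) * c :=
  (Finset.sum_mul _ _ _).symm

theorem exC' {N : ℕ} (f g : Fin N → ℝ) (c : ℝ) :
    (∑ i, f i * (g i * c)) = (∑ i, f i * g i) * c := by
  rw [Finset.sum_mul]; exact Finset.sum_congr rfl (fun i _ => by ring)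

set_option maxHeartbeats 12000000 in
/-- At a rank-one solution `φ = u ⊗ v ⊗ w`, the Hessian of `V` in the direction of the
solution itself satisfies `H(φ)(u⊗v⊗w) = -2λ₂ (u⊗v⊗w)`. -/
theorem rank_one_radial_mode (N : ℕ) (hN : 1 ≤ N)
    (l2 ld lp lt a1 a2 a3 : ℝ)
    (u v w : Fin N → ℝ)
    (φ : Fin N → Fin N → Fin N → ℝ) (hφ : φ = fun a b c => u a * v b * w c)
    (D : ℝ)
    (hD : D = ld + lp * (N : ℝ) * (a1 + a2 + a3) + lt * (N : ℝ) ^ ((3 : ℝ) / 2))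
    (hsol : l2 + D / (N : ℝ) ^ 3 *
      ((∑ a, (u a) ^ 2) * (∑ b, (v b) ^ 2) * (∑ c, (w c) ^ 2)) = 0) :
    hessApply N l2 ld lp lt a1 a2 a3 φ (fun a b c => u a * v b * w c)
      = fun a b c => -2 * l2 * (u a * v b * w c) := by
  subst hφ hD
  have hNpos : (0:ℝ) < (N:ℝ) := by exact_mod_cast hN
  funext a b c
  simp (config := { maxSteps := 100000000 }) (disch := fun_prop) only [hessApply, potV,
    deriv_fun_sum, deriv_fun_pow, deriv_fun_add, deriv_const_mul_field,
    deriv_const, deriv_fun_mul, deriv_id'', deriv_const', zero_mul, mul_zero, add_zero, zero_add,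
    one_mul, mul_one, differentiableAt_const, differentiableAt_fun_id]
  simp only [show (2:ℕ)-1 = 1 from rfl, pow_one, Nat.cast_ofNat]
  simp only [ite_and, mul_ite, ite_mul, mul_one, one_mul, mul_zero, zero_mul, add_mul, mul_add,
    mul_pow, Finset.sum_add_distrib, sum_ite_c', Finset.sum_ite_eq, Finset.sum_ite_eq',
    Finset.mem_univ, if_true]
  simp only [mul_comm, mul_left_comm, mul_assoc]
  simp only [exA', exB', exC']
  simp only [← pow_two]
  set x := Real.sqrt (N:ℝ) with hxdef
  have hx : x ≠ 0 := by positivity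
  have h32 : (N:ℝ) ^ ((3:ℝ)/2) = x ^ 3 := by
    rw [hxdef, Real.sqrt_eq_rpow, ← Real.rpow_natCast ((N:ℝ) ^ ((1:ℝ)/2)) 3,
      ← Real.rpow_mul hNpos.le]
    norm_num
  have hN2 : (N:ℝ) = x ^ 2 := (Real.sq_sqrt hNpos.le).symm
  rw [h32] at hsol ⊢
  rw [hN2] at hsol ⊢
  field_simp at hsol ⊢
  linear_combination (12 * (u a * v b * w c)) * hsol
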